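/- arXiv:math/0101245 — 7 statements merged into one kernel-verified Lean document; each statement's English description precedes it below -/
import Mathlib

section
/- Suppose the eleven known blocks a, b, c, d, e, f, g, h, i, j, k are invertible and that A·B = I and B·A = I. Then z = z·e·z + z·d·g + j·b·z − k·c·i + j·a·g. -/
open Matrix

/-- The 3×3 block matrix `[[m11, m12, m13], [m21, m22, m23], [m31, m32, m33]]`
assembled from n×n blocks. -/
def blk3 {F : Type*} [Field F] {n : ℕ}
    (m11 m12 m13 m21 m22 m23 m31 m32 m33 : Matrix (Fin n) (Fin n) F) :
    Matrix (Fin n ⊕ (Fin n ⊕ Fin n)) (Fin n ⊕ (Fin n ⊕ Fin n)) F :=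
  Matrix.fromBlocks m11 (Matrix.fromCols m12 m13) (Matrix.fromRows m21 m31)
    (Matrix.fromBlocks m22 m23 m32 m33)

lemma fromColumns_add' {F : Type*} [Field F] {n : ℕ}
    (A₁ A₂ B₁ B₂ : Matrix (Fin n) (Fin n) F) :
    Matrix.fromCols A₁ A₂ + Matrix.fromCols B₁ B₂ =
      Matrix.fromCols (A₁ + B₁) (A₂ + B₂) := by
  ext _ (_ | _) <;> simp

lemma fromRows_add' {F : Type*} [Field F] {n : ℕ}
    (A₁ A₂ B₁ B₂ : Matrix (Fin n) (Fin n) F) :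
    Matrix.fromRows A₁ A₂ + Matrix.fromRows B₁ B₂ =
      Matrix.fromRows (A₁ + B₁) (A₂ + B₂) := by
  ext (_ | _) _ <;> simp

lemma blk3_mul {F : Type*} [Field F] {n : ℕ}
    (m11 m12 m13 m21 m22 m23 m31 m32 m33
     p11 p12 p13 p21 p22 p23 p31 p32 p33 : Matrix (Fin n) (Fin n) F) :
    blk3 m11 m12 m13 m21 m22 m23 m31 m32 m33 * blk3 p11 p12 p13 p21 p22 p23 p31 p32 p33 =
      blk3 (m11*p11 + m12*p21 + m13*p31) (m11*p12 + m12*p22 + m13*p32)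
        (m11*p13 + m12*p23 + m13*p33)
        (m21*p11 + m22*p21 + m23*p31) (m21*p12 + m22*p22 + m23*p32)
        (m21*p13 + m22*p23 + m23*p33)
        (m31*p11 + m32*p21 + m33*p31) (m31*p12 + m32*p22 + m33*p32)
        (m31*p13 + m32*p23 + m33*p33) := by
  unfold blk3
  simp [Matrix.fromBlocks_multiply, Matrix.fromCols_mul_fromRows,
    Matrix.fromRows_mul, Matrix.mul_fromCols, Matrix.fromCols_mul_fromBlocks,
    Matrix.fromBlocks_mul_fromRows, fromColumns_add', fromRows_add',
    Matrix.fromBlocks_add, add_assoc]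

lemma blk3_one {F : Type*} [Field F] {n : ℕ} :
    (1 : Matrix (Fin n ⊕ (Fin n ⊕ Fin n)) (Fin n ⊕ (Fin n ⊕ Fin n)) F) =
      blk3 1 0 0 0 1 0 0 0 1 := by
  unfold blk3
  ext (_ | _ | _) (_ | _ | _) <;>
    simp [Matrix.fromBlocks, Matrix.one_apply]

lemma blk3_inj {F : Type*} [Field F] {n : ℕ}
    {m11 m12 m13 m21 m22 m23 m31 m32 m33
     p11 p12 p13 p21 p22 p23 p31 p32 p33 : Matrix (Fin n) (Fin n) F}
    (h : blk3 m11 m12 m13 m21 m22 m23 m31 m32 m33 =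
      blk3 p11 p12 p13 p21 p22 p23 p31 p32 p33) :
    m11 = p11 ∧ m12 = p12 ∧ m13 = p13 ∧ m21 = p21 ∧ m22 = p22 ∧ m23 = p23 ∧
      m31 = p31 ∧ m32 = p32 ∧ m33 = p33 := by
  unfold blk3 at h
  rw [Matrix.fromBlocks_inj] at h
  obtain ⟨h1, h2, h3, h4⟩ := h
  rw [Matrix.fromCols_inj.eq_iff] at h2
  rw [Matrix.fromRows_inj.eq_iff] at h3
  rw [Matrix.fromBlocks_inj] at h4
  tauto

theorem stmt_3 {F : Type*} [Field F] {n : ℕ} (hn : 0 < n)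
    (a b c d e f g h i j k : Matrix (Fin n) (Fin n) F)
    (ha : IsUnit a) (hb : IsUnit b) (hc : IsUnit c) (hd : IsUnit d) (he : IsUnit e)
    (hf : IsUnit f) (hg : IsUnit g) (hh : IsUnit h) (hi : IsUnit i) (hj : IsUnit j)
    (hk : IsUnit k)
    (t u v w x y z : Matrix (Fin n) (Fin n) F)
    (hAB : blk3 a t b u c v d w e * blk3 x f g h y i j k z = 1)
    (hBA : blk3 x f g h y i j k z * blk3 a t b u c v d w e = 1) :
    z = z * e * z + z * d * g + j * b * z - k * c * i + j * a * g := by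
  rw [blk3_mul, blk3_one] at hAB hBA
  obtain ⟨-, -, e1, -, -, -, -, -, e2⟩ := blk3_inj hAB
  obtain ⟨-, -, -, -, -, -, -, e3, -⟩ := blk3_inj hBA
  have key : z * e * z + z * d * g + j * b * z - k * c * i + j * a * g =
      z + (z * ((d * g + w * i + e * z) - 1) + j * (a * g + t * i + b * z)
        - (j * a + k * u + z * d) * 0 - (j * t + k * c + z * w) * i) := by
    noncomm_ring
  rw [e1, e2, e3] at key
  simpa using key.symm
end

section
/- Suppose the eleven known blocks a, b, c, d, e, f, g, h, i, j, k are invertible and that A·B = I and B·A = I. Then f⁻¹·a⁻¹ − f⁻¹·g·d·a⁻¹ + k⁻¹·z·d·a⁻¹ = −k⁻¹·b⁻¹ − f⁻¹·g·e·b⁻¹ + k⁻¹·z·e·b⁻¹. -/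
open Matrix

lemma blk3_aux_alg {F : Type*} [Field F] {n : ℕ}
    (a b f k x z u v j g d e : Matrix (Fin n) (Fin n) F)
    (ha : IsUnit a) (hb : IsUnit b) (hf : IsUnit f) (hk : IsUnit k)
    (eq11 : x*a + f*u + g*d = 1) (eq13 : x*b + f*v + g*e = 0)
    (eq31 : j*a + k*u + z*d = 0) (eq33 : j*b + k*v + z*e = 1) :
    f⁻¹ * a⁻¹ - f⁻¹ * g * d * a⁻¹ + k⁻¹ * z * d * a⁻¹ =
      -(k⁻¹ * b⁻¹) - f⁻¹ * g * e * b⁻¹ + k⁻¹ * z * e * b⁻¹ := by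
  have haa : a * a⁻¹ = 1 := Matrix.mul_nonsing_inv a ((Matrix.isUnit_iff_isUnit_det a).mp ha)
  have hbb : b * b⁻¹ = 1 := Matrix.mul_nonsing_inv b ((Matrix.isUnit_iff_isUnit_det b).mp hb)
  have hff : f⁻¹ * f = 1 := Matrix.nonsing_inv_mul f ((Matrix.isUnit_iff_isUnit_det f).mp hf)
  have hkk : k⁻¹ * k = 1 := Matrix.nonsing_inv_mul k ((Matrix.isUnit_iff_isUnit_det k).mp hk)
  have E1 : f⁻¹ * a⁻¹ - f⁻¹ * g * d * a⁻¹ = f⁻¹ * x + u * a⁻¹ := by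
    calc f⁻¹ * a⁻¹ - f⁻¹ * g * d * a⁻¹
        = f⁻¹ * (x*a + f*u + g*d) * a⁻¹ - f⁻¹ * g * d * a⁻¹ := by rw [eq11, mul_one]
      _ = f⁻¹ * x * (a * a⁻¹) + f⁻¹ * f * (u * a⁻¹) := by noncomm_ring
      _ = f⁻¹ * x + u * a⁻¹ := by rw [haa, hff, mul_one, one_mul]
  have E2 : k⁻¹ * z * d * a⁻¹ = -(k⁻¹ * j) - u * a⁻¹ := by
    have h0 : k⁻¹ * (j*a + k*u + z*d) * a⁻¹ = 0 := by rw [eq31]; simp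
    have h1 : k⁻¹ * j * (a * a⁻¹) + k⁻¹ * k * (u * a⁻¹) + k⁻¹ * z * d * a⁻¹ = 0 := by
      rw [← h0]; noncomm_ring
    rw [haa, hkk, mul_one, one_mul] at h1
    linear_combination (norm := noncomm_ring) h1
  have E3 : -(f⁻¹ * g * e * b⁻¹) = f⁻¹ * x + v * b⁻¹ := by
    have h0 : f⁻¹ * (x*b + f*v + g*e) * b⁻¹ = 0 := by rw [eq13]; simp
    have h1 : f⁻¹ * x * (b * b⁻¹) + f⁻¹ * f * (v * b⁻¹) + f⁻¹ * g * e * b⁻¹ = 0 := by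
      rw [← h0]; noncomm_ring
    rw [hbb, hff, mul_one, one_mul] at h1
    linear_combination (norm := noncomm_ring) -h1
  have E4 : k⁻¹ * z * e * b⁻¹ = k⁻¹ * b⁻¹ - k⁻¹ * j - v * b⁻¹ := by
    have h0 : k⁻¹ * (j*b + k*v + z*e) * b⁻¹ = k⁻¹ * b⁻¹ := by rw [eq33, mul_one]
    have h1 : k⁻¹ * j * (b * b⁻¹) + k⁻¹ * k * (v * b⁻¹) + k⁻¹ * z * e * b⁻¹ = k⁻¹ * b⁻¹ := by
      rw [← h0]; noncomm_ring
    rw [hbb, hkk, mul_one, one_mul] at h1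
    linear_combination (norm := noncomm_ring) h1
  linear_combination (norm := noncomm_ring) E1 + E2 - E3 - E4

lemma blk3_mul_s5 {F : Type*} [Field F] {n : ℕ}
    (a11 a12 a13 a21 a22 a23 a31 a32 a33
     b11 b12 b13 b21 b22 b23 b31 b32 b33 : Matrix (Fin n) (Fin n) F) :
    blk3 a11 a12 a13 a21 a22 a23 a31 a32 a33 * blk3 b11 b12 b13 b21 b22 b23 b31 b32 b33 =
    blk3 (a11*b11 + a12*b21 + a13*b31) (a11*b12 + a12*b22 + a13*b32) (a11*b13 + a12*b23 + a13*b33)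
         (a21*b11 + a22*b21 + a23*b31) (a21*b12 + a22*b22 + a23*b32) (a21*b13 + a22*b23 + a23*b33)
         (a31*b11 + a32*b21 + a33*b31) (a31*b12 + a32*b22 + a33*b32) (a31*b13 + a32*b23 + a33*b33) := by
  ext (i|i|i) (j|j|j) <;>
    simp [blk3, Matrix.mul_apply, Fintype.sum_sum_type, Finset.sum_add_distrib] <;> ring

lemma blk3_inj_s5 {F : Type*} [Field F] {n : ℕ}
    {a11 a12 a13 a21 a22 a23 a31 a32 a33
     b11 b12 b13 b21 b22 b23 b31 b32 b33 : Matrix (Fin n) (Fin n) F}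
    (h : blk3 a11 a12 a13 a21 a22 a23 a31 a32 a33 = blk3 b11 b12 b13 b21 b22 b23 b31 b32 b33) :
    a11 = b11 ∧ a12 = b12 ∧ a13 = b13 ∧ a21 = b21 ∧ a22 = b22 ∧ a23 = b23 ∧
      a31 = b31 ∧ a32 = b32 ∧ a33 = b33 := by
  refine ⟨?_, ?_, ?_, ?_, ?_, ?_, ?_, ?_, ?_⟩ <;> ext i j <;>
    (first
      | exact congrFun (congrFun h (Sum.inl i)) (Sum.inl j)
      | exact congrFun (congrFun h (Sum.inl i)) (Sum.inr (Sum.inl j))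
      | exact congrFun (congrFun h (Sum.inl i)) (Sum.inr (Sum.inr j))
      | exact congrFun (congrFun h (Sum.inr (Sum.inl i))) (Sum.inl j)
      | exact congrFun (congrFun h (Sum.inr (Sum.inl i))) (Sum.inr (Sum.inl j))
      | exact congrFun (congrFun h (Sum.inr (Sum.inl i))) (Sum.inr (Sum.inr j))
      | exact congrFun (congrFun h (Sum.inr (Sum.inr i))) (Sum.inl j)
      | exact congrFun (congrFun h (Sum.inr (Sum.inr i))) (Sum.inr (Sum.inl j))
      | exact congrFun (congrFun h (Sum.inr (Sum.inr i))) (Sum.inr (Sum.inr j)))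

theorem stmt_5 {F : Type*} [Field F] {n : ℕ} (hn : 0 < n)
    (a b c d e f g h i j k : Matrix (Fin n) (Fin n) F)
    (ha : IsUnit a) (hb : IsUnit b) (hc : IsUnit c) (hd : IsUnit d) (he : IsUnit e)
    (hf : IsUnit f) (hg : IsUnit g) (hh : IsUnit h) (hi : IsUnit i) (hj : IsUnit j)
    (hk : IsUnit k)
    (t u v w x y z : Matrix (Fin n) (Fin n) F)
    (hAB : blk3 a t b u c v d w e * blk3 x f g h y i j k z = 1)
    (hBA : blk3 x f g h y i j k z * blk3 a t b u c v d w e = 1) :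
    f⁻¹ * a⁻¹ - f⁻¹ * g * d * a⁻¹ + k⁻¹ * z * d * a⁻¹ =
      -(k⁻¹ * b⁻¹) - f⁻¹ * g * e * b⁻¹ + k⁻¹ * z * e * b⁻¹ := by
  rw [blk3_mul_s5, blk3_one] at hBA
  obtain ⟨e11, e12, e13, e21, e22, e23, e31, e32, e33⟩ := blk3_inj_s5 hBA
  exact blk3_aux_alg a b f k x z u v j g d e ha hb hf hk e11 e13 e31 e33
end

section
/- Suppose the eleven known blocks a, b, c, d, e, f, g, h, i, j, k are invertible and that A·B = I and B·A = I. Then t = −a·g·i⁻¹ − b·z·i⁻¹. -/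
open Matrix

theorem stmt_6 {F : Type*} [Field F] {n : ℕ} (hn : 0 < n)
    (a b c d e f g h i j k : Matrix (Fin n) (Fin n) F)
    (ha : IsUnit a) (hb : IsUnit b) (hc : IsUnit c) (hd : IsUnit d) (he : IsUnit e)
    (hf : IsUnit f) (hg : IsUnit g) (hh : IsUnit h) (hi : IsUnit i) (hj : IsUnit j)
    (hk : IsUnit k)
    (t u v w x y z : Matrix (Fin n) (Fin n) F)
    (hAB : blk3 a t b u c v d w e * blk3 x f g h y i j k z = 1)
    (hBA : blk3 x f g h y i j k z * blk3 a t b u c v d w e = 1) :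
    t = -(a * g * i⁻¹) - b * z * i⁻¹ := by
  have h1 : (1 : Matrix (Fin n ⊕ (Fin n ⊕ Fin n)) (Fin n ⊕ (Fin n ⊕ Fin n)) F) =
      fromBlocks 1 0 0 (fromBlocks 1 0 0 1) := by
    simp [Matrix.fromBlocks_one]
  rw [blk3, blk3, fromBlocks_multiply, h1, fromBlocks_inj,
      mul_fromCols, fromCols_mul_fromBlocks] at hAB
  obtain ⟨-, h2, -, -⟩ := hAB
  have h3 : a * g + (t * i + b * z) = 0 := by
    ext p q
    have := congrFun (congrFun h2 p) (Sum.inr q)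
    simpa [fromCols] using this
  have key : t * i = -(a * g) - b * z := by
    linear_combination (norm := noncomm_ring) h3
  have hinv : i * i⁻¹ = 1 := mul_nonsing_inv i (((Matrix.isUnit_iff_isUnit_det i).mp hi))
  calc t = t * (i * i⁻¹) := by rw [hinv, mul_one]
    _ = t * i * i⁻¹ := by rw [mul_assoc]
    _ = (-(a * g) - b * z) * i⁻¹ := by rw [key]
    _ = -(a * g * i⁻¹) - b * z * i⁻¹ := by noncomm_ring
end

section
/- Suppose the eleven known blocks a, b, c, d, e, f, g, h, i, j, k are invertible and that A·B = I and B·A = I. Then u = −k⁻¹·j·a − k⁻¹·z·d. -/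
open Matrix

theorem stmt_7 {F : Type*} [Field F] {n : ℕ} (hn : 0 < n)
    (a b c d e f g h i j k : Matrix (Fin n) (Fin n) F)
    (ha : IsUnit a) (hb : IsUnit b) (hc : IsUnit c) (hd : IsUnit d) (he : IsUnit e)
    (hf : IsUnit f) (hg : IsUnit g) (hh : IsUnit h) (hi : IsUnit i) (hj : IsUnit j)
    (hk : IsUnit k)
    (t u v w x y z : Matrix (Fin n) (Fin n) F)
    (hAB : blk3 a t b u c v d w e * blk3 x f g h y i j k z = 1)
    (hBA : blk3 x f g h y i j k z * blk3 a t b u c v d w e = 1) :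
    u = -(k⁻¹ * j * a) - k⁻¹ * z * d := by
  have key : j * a + (k * u + z * d) = 0 := by
    have h1 := congrArg Matrix.toBlocks₂₁ hBA
    rw [blk3, blk3, Matrix.fromBlocks_multiply] at h1
    have h2 := congrArg Matrix.toRows₂ h1
    simp [Matrix.fromBlocks_one, Matrix.add_mul, Matrix.fromRows_mul,
      Matrix.fromBlocks_mul_fromRows, Matrix.toRows₂] at h2
    ext p q
    have := congrFun (congrFun h2 p) q
    simpa [Matrix.add_apply, Matrix.mul_apply, Matrix.toBlocks₂₁, Matrix.one_apply] using this
  have hkI := hk.invertible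
  have : k * u = -(j * a) - z * d := by
    linear_combination (norm := noncomm_ring) key
  calc u = k⁻¹ * (k * u) := by rw [Matrix.inv_mul_cancel_left_of_invertible]
    _ = -(k⁻¹ * j * a) - k⁻¹ * z * d := by rw [this]; noncomm_ring
end

section
/- Suppose the eleven known blocks a, b, c, d, e, f, g, h, i, j, k are invertible and that A·B = I and B·A = I. Then v = k⁻¹ − k⁻¹·j·b − k⁻¹·z·e. -/
open Matrix

theorem stmt_8 {F : Type*} [Field F] {n : ℕ} (hn : 0 < n)
    (a b c d e f g h i j k : Matrix (Fin n) (Fin n) F)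
    (ha : IsUnit a) (hb : IsUnit b) (hc : IsUnit c) (hd : IsUnit d) (he : IsUnit e)
    (hf : IsUnit f) (hg : IsUnit g) (hh : IsUnit h) (hi : IsUnit i) (hj : IsUnit j)
    (hk : IsUnit k)
    (t u v w x y z : Matrix (Fin n) (Fin n) F)
    (hAB : blk3 a t b u c v d w e * blk3 x f g h y i j k z = 1)
    (hBA : blk3 x f g h y i j k z * blk3 a t b u c v d w e = 1) :
    v = k⁻¹ - k⁻¹ * j * b - k⁻¹ * z * e := by
  have key : j * b + (k * v + z * e) = 1 := by
    have h1 := congrArg Matrix.toBlocks₂₂ hBA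
    simp only [blk3, Matrix.fromBlocks_multiply, Matrix.fromRows_mul_fromCols,
      Matrix.fromBlocks_add, Matrix.toBlocks_fromBlocks₂₂] at h1
    have h2 := congrArg Matrix.toBlocks₂₂ h1
    simp only [Matrix.toBlocks_fromBlocks₂₂] at h2
    simpa [Matrix.toBlocks₂₂, Matrix.one_apply, Matrix.ext_iff.symm] using h2
  have hk' : k⁻¹ * k = 1 :=
    Matrix.nonsing_inv_mul k ((Matrix.isUnit_iff_isUnit_det k).mp hk)
  have hkv : k * v = 1 - j * b - z * e := by linear_combination (norm := noncomm_ring) key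
  calc v = k⁻¹ * k * v := by rw [hk', one_mul]
    _ = k⁻¹ * (1 - j * b - z * e) := by rw [Matrix.mul_assoc, hkv]
    _ = k⁻¹ - k⁻¹ * j * b - k⁻¹ * z * e := by noncomm_ring
end

section
/- Suppose the eleven known blocks a, b, c, d, e, f, g, h, i, j, k are invertible and that A·B = I and B·A = I. Then w = i⁻¹ − d·g·i⁻¹ − e·z·i⁻¹. -/
open Matrix

lemma toBlocks22_one {F : Type*} [Field F] {m p : Type*} [DecidableEq m] [DecidableEq p]
    : (1 : Matrix (m ⊕ p) (m ⊕ p) F).toBlocks₂₂ = 1 := by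
  rw [← Matrix.fromBlocks_one, Matrix.toBlocks_fromBlocks₂₂]

theorem stmt_9 {F : Type*} [Field F] {n : ℕ} (hn : 0 < n)
    (a b c d e f g h i j k : Matrix (Fin n) (Fin n) F)
    (ha : IsUnit a) (hb : IsUnit b) (hc : IsUnit c) (hd : IsUnit d) (he : IsUnit e)
    (hf : IsUnit f) (hg : IsUnit g) (hh : IsUnit h) (hi : IsUnit i) (hj : IsUnit j)
    (hk : IsUnit k)
    (t u v w x y z : Matrix (Fin n) (Fin n) F)
    (hAB : blk3 a t b u c v d w e * blk3 x f g h y i j k z = 1)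
    (hBA : blk3 x f g h y i j k z * blk3 a t b u c v d w e = 1) :
    w = i⁻¹ - d * g * i⁻¹ - e * z * i⁻¹ := by
  have key : d * g + (w * i + e * z) = 1 := by
    have h22 := congrArg (fun M => (M.toBlocks₂₂).toBlocks₂₂) hAB
    simpa [blk3, Matrix.fromBlocks_multiply, Matrix.fromRows_mul_fromCols,
      Matrix.fromBlocks_add, Matrix.fromBlocks_one, Matrix.toBlocks_fromBlocks₂₂, toBlocks22_one] using h22
  have hii : i * i⁻¹ = 1 := Matrix.mul_nonsing_inv i
    ((Matrix.isUnit_iff_isUnit_det i).mp hi)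
  have hwi : w * i = 1 - d * g - e * z := by
    have := key
    linear_combination (norm := noncomm_ring) this
  calc w = w * (i * i⁻¹) := by rw [hii, mul_one]
    _ = (w * i) * i⁻¹ := by rw [mul_assoc]
    _ = (1 - d * g - e * z) * i⁻¹ := by rw [hwi]
    _ = i⁻¹ - d * g * i⁻¹ - e * z * i⁻¹ := by noncomm_ring
end

section
/- Suppose the eleven known blocks a, b, c, d, e, f, g, h, i, j, k are invertible and that A·B = I and B·A = I. Then x = a⁻¹ + f·k⁻¹·j − g·d·a⁻¹ + f·k⁻¹·z·d·a⁻¹. -/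
open Matrix

theorem stmt_10 {F : Type*} [Field F] {n : ℕ} (hn : 0 < n)
    (a b c d e f g h i j k : Matrix (Fin n) (Fin n) F)
    (ha : IsUnit a) (hb : IsUnit b) (hc : IsUnit c) (hd : IsUnit d) (he : IsUnit e)
    (hf : IsUnit f) (hg : IsUnit g) (hh : IsUnit h) (hi : IsUnit i) (hj : IsUnit j)
    (hk : IsUnit k)
    (t u v w x y z : Matrix (Fin n) (Fin n) F)
    (hAB : blk3 a t b u c v d w e * blk3 x f g h y i j k z = 1)
    (hBA : blk3 x f g h y i j k z * blk3 a t b u c v d w e = 1) :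
    x = a⁻¹ + f * k⁻¹ * j - g * d * a⁻¹ + f * k⁻¹ * z * d * a⁻¹ := by
  have e1 : x * a + (f * u + g * d) = 1 := by
    have := congrArg Matrix.toBlocks₁₁ hBA
    simpa [blk3, fromBlocks_multiply, fromCols_mul_fromRows, ← fromBlocks_one] using this
  have e2 : j * a + (k * u + z * d) = 0 := by
    have := congrArg (fun M => Matrix.toRows₂ (Matrix.toBlocks₂₁ M)) hBA
    simpa [blk3, fromBlocks_multiply, fromBlocks_mul_fromRows, fromRows_mul,
      ← fromBlocks_one,
      (show ∀ A B C D : Matrix (Fin n) (Fin n) F, fromRows A B + fromRows C D =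
        fromRows (A + C) (B + D) from fun A B C D => by ext (i | i) j <;> simp),
      (show toRows₂ (0 : Matrix (Fin n ⊕ Fin n) (Fin n) F) = 0 from by ext; rfl)] using this
  have hA := (Matrix.isUnit_iff_isUnit_det a).mp ha
  have hK := (Matrix.isUnit_iff_isUnit_det k).mp hk
  have haa : a * a⁻¹ = 1 := Matrix.mul_nonsing_inv a hA
  have hkk : k⁻¹ * k = 1 := Matrix.nonsing_inv_mul k hK
  have h1 : k * u = -(j * a) - z * d := by
    have h2 := eq_neg_of_add_eq_zero_right e2
    calc k * u = (k * u + z * d) - z * d := by abel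
      _ = -(j * a) - z * d := by rw [h2]
  have hu : u = k⁻¹ * (-(j * a) - z * d) := by
    calc u = (k⁻¹ * k) * u := by rw [hkk, one_mul]
      _ = k⁻¹ * (k * u) := by rw [Matrix.mul_assoc]
      _ = _ := by rw [h1]
  have hx : x * a = 1 - (f * u + g * d) := eq_sub_of_add_eq e1
  calc x = (x * a) * a⁻¹ := by rw [Matrix.mul_assoc, haa, Matrix.mul_one]
    _ = (1 - (f * (k⁻¹ * (-(j * a) - z * d)) + g * d)) * a⁻¹ := by rw [hx, hu]
    _ = a⁻¹ + f * k⁻¹ * (j * (a * a⁻¹)) - g * d * a⁻¹ + f * k⁻¹ * (z * (d * a⁻¹)) := by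
        simp only [Matrix.mul_sub, Matrix.sub_mul, Matrix.add_mul, Matrix.mul_add,
          Matrix.mul_neg, Matrix.neg_mul, Matrix.one_mul, Matrix.mul_assoc]
        abel
    _ = _ := by rw [haa]; simp [Matrix.mul_assoc]
end
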